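/- arXiv:1009.2989 — 7 statements merged into one kernel-verified Lean document; each statement's English description precedes it below -/
import Mathlib

section
/- Every root of the symmetrized Pochhammer polynomial P_k^+(t) = (P_k(it)+P_k(-it))/2 is real: if t = u + iv with u, v real and P_k^+(t) = 0, then v = 0. -/
open Complex

noncomputable def P (k : ℕ) (s : ℂ) : ℂ := ∏ j ∈ Finset.Icc 1 k, (1 - s / j)

noncomputable def Pplus (k : ℕ) (t : ℂ) : ℂ := (P k (I * t) + P k (-(I * t))) / 2

lemma key_lt (j : ℕ) (hj : 1 ≤ j) (u v : ℝ) (hv : 0 < v) :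
    ‖1 + I * ((u : ℂ) + I * v) / (j : ℂ)‖ <
      ‖1 - I * ((u : ℂ) + I * v) / (j : ℂ)‖ := by
  have hjR : (0 : ℝ) < (j : ℝ) := by exact_mod_cast hj
  have hjC : (j : ℂ) ≠ 0 := Nat.cast_ne_zero.mpr (by omega)
  have e1 : (1 : ℂ) - I * ((u : ℂ) + I * v) / (j : ℂ)
      = ((1 + v / j : ℝ) : ℂ) + ((-(u / j) : ℝ) : ℂ) * I := by
    push_cast
    field_simp
    linear_combination (-(v:ℂ)) * Complex.I_sq
  have e2 : (1 : ℂ) + I * ((u : ℂ) + I * v) / (j : ℂ)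
      = ((1 - v / j : ℝ) : ℂ) + ((u / j : ℝ) : ℂ) * I := by
    push_cast
    field_simp
    linear_combination ((v:ℂ)) * Complex.I_sq
  rw [e1, e2, Complex.norm_add_mul_I, Complex.norm_add_mul_I]
  apply Real.sqrt_lt_sqrt (by positivity)
  have : 0 < v / j := div_pos hv hjR
  nlinarith [sq_nonneg (u / j)]

lemma main_ne (k : ℕ) (u v : ℝ) (hv : 0 < v) : Pplus k (u + I * v) ≠ 0 := by
  intro h
  rcases Nat.eq_zero_or_pos k with hk | hk
  · subst hk
    simp [Pplus, P] at h
  set t : ℂ := (u : ℂ) + I * v with ht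
  have habs : ‖P k (I * t)‖ = ‖P k (-(I * t))‖ := by
    have : P k (I * t) = -P k (-(I * t)) := by
      have := h
      unfold Pplus at this
      field_simp at this
      linear_combination this
    rw [this, norm_neg]
  have hA : (∏ j ∈ Finset.Icc 1 k, ‖1 - I * t / (j : ℂ)‖)
      = ∏ j ∈ Finset.Icc 1 k, ‖1 + I * t / (j : ℂ)‖ := by
    have h1 : ‖P k (I * t)‖ = ∏ j ∈ Finset.Icc 1 k, ‖1 - I * t / (j : ℂ)‖ := by
      simp [P, norm_prod]
    have h2 : ‖P k (-(I * t))‖ = ∏ j ∈ Finset.Icc 1 k, ‖1 + I * t / (j : ℂ)‖ := by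
      simp [P, norm_prod, sub_neg_eq_add, neg_div]
    rw [h1, h2] at habs
    exact habs
  have hlt : ∀ j ∈ Finset.Icc 1 k, ‖1 + I * t / (j : ℂ)‖ <
      ‖1 - I * t / (j : ℂ)‖ := by
    intro j hjm
    exact key_lt j (Finset.mem_Icc.mp hjm).1 u v hv
  have hBpos : 0 < ∏ j ∈ Finset.Icc 1 k, ‖1 - I * t / (j : ℂ)‖ := by
    apply Finset.prod_pos
    intro j hjm
    exact lt_of_le_of_lt (norm_nonneg _) (hlt j hjm)
  have hfpos : ∀ j ∈ Finset.Icc 1 k, 0 < ‖1 + I * t / (j : ℂ)‖ := by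
    intro j hjm
    rcases (norm_nonneg (1 + I * t / (j : ℂ))).lt_or_eq with h' | h'
    · exact h'
    · exfalso
      have : (∏ j ∈ Finset.Icc 1 k, ‖1 + I * t / (j : ℂ)‖) = 0 :=
        Finset.prod_eq_zero hjm h'.symm
      rw [← hA] at this
      exact hBpos.ne' this
  have hne : (Finset.Icc 1 k).Nonempty := ⟨1, Finset.mem_Icc.mpr ⟨le_refl 1, hk⟩⟩
  have := Finset.prod_lt_prod_of_nonempty hfpos hlt hne
  rw [hA] at this
  exact lt_irrefl _ this

lemma conj_Pplus (k : ℕ) (t : ℂ) :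
    (starRingEnd ℂ) (Pplus k t) = Pplus k ((starRingEnd ℂ) t) := by
  have hP : ∀ s : ℂ, (starRingEnd ℂ) (P k s) = P k ((starRingEnd ℂ) s) := by
    intro s
    simp [P, map_prod]
  simp only [Pplus, map_div₀, map_add, hP, map_mul, Complex.conj_I, map_neg,
    map_ofNat]
  ring

theorem Pplus_roots_real (k : ℕ) (u v : ℝ) (h : Pplus k (u + I * v) = 0) : v = 0 := by
  by_contra hv
  rcases lt_or_gt_of_ne hv with hneg | hpos
  · have hc : Pplus k ((u : ℂ) + I * (-v : ℝ)) = 0 := by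
      have := congrArg (starRingEnd ℂ) h
      rw [conj_Pplus] at this
      simpa [Complex.conj_I, mul_comm] using this
    exact main_ne k u (-v) (by linarith) hc
  · exact main_ne k u v hpos h
end

section
/- If t = u + iv is a complex root of P_k^+ (i.e., |P_k(iu - v)| = |P_k(-iu + v)|), then ∏_{j=1}^k ((j+v)^2 + u^2) = ∏_{j=1}^k ((j-v)^2 + u^2), and if v > 0 with |v| < 1 then each factor on the left strictly exceeds the corresponding factor on the right, a contradiction; hence for k ≥ 1 the equality ∏_{j=1}^k ((j+v)^2+u^2) = ∏_{j=1}^k ((j-v)^2+u^2) with u,v real and |v|<1 forces v = 0. -/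
lemma prod_lt_aux (k : ℕ) (hk : 1 ≤ k) (u v : ℝ) (hv : 0 < v) (hv1 : v < 1) :
    ∏ j ∈ Finset.Icc 1 k, (((j : ℝ) - v) ^ 2 + u ^ 2)
      < ∏ j ∈ Finset.Icc 1 k, (((j : ℝ) + v) ^ 2 + u ^ 2) := by
  apply Finset.prod_lt_prod_of_nonempty
  · intro j hj
    simp only [Finset.mem_Icc] at hj
    have h1 : (1 : ℝ) ≤ (j : ℝ) := by exact_mod_cast hj.1
    nlinarith
  · intro j hj
    simp only [Finset.mem_Icc] at hj
    have h1 : (1 : ℝ) ≤ (j : ℝ) := by exact_mod_cast hj.1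
    nlinarith
  · exact ⟨1, Finset.mem_Icc.mpr ⟨le_refl 1, hk⟩⟩

theorem product_equality_forces_v_zero (k : ℕ) (hk : 1 ≤ k) :
    (∀ u v : ℝ, 0 < v → |v| < 1 → ∀ j ∈ Finset.Icc 1 k,
        (((j : ℝ) - v) ^ 2 + u ^ 2) < (((j : ℝ) + v) ^ 2 + u ^ 2)) ∧
    (∀ u v : ℝ, |v| < 1 →
      ∏ j ∈ Finset.Icc 1 k, (((j : ℝ) + v) ^ 2 + u ^ 2)
        = ∏ j ∈ Finset.Icc 1 k, (((j : ℝ) - v) ^ 2 + u ^ 2) → v = 0) := by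
  constructor
  · intro u v hv hv1 j hj
    simp only [Finset.mem_Icc] at hj
    have h1 : (1 : ℝ) ≤ (j : ℝ) := by exact_mod_cast hj.1
    nlinarith
  · intro u v hv1 heq
    rw [abs_lt] at hv1
    by_contra hne
    rcases lt_or_gt_of_ne hne with h | h
    · have := prod_lt_aux k hk u (-v) (by linarith) (by linarith)
      simp only [sub_neg_eq_add, ← sub_eq_add_neg] at this
      linarith [this, heq ▸ this]
    · have := prod_lt_aux k hk u v h hv1.2
      linarith
end

section
/- For all n ∈ ℕ and all nonzero complex t, ∑_{k=0}^n P_k^+(t)/(k+1) = -P_{n+1}^-(t)/t, where P_k^+ and P_k^- are the even and odd parts of P_k(it). -/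
open Complex

noncomputable def Pminus (k : ℕ) (t : ℂ) : ℂ := (P k (I * t) - P k (-(I * t))) / (2 * I)

lemma P_succ (k : ℕ) (s : ℂ) : P (k + 1) s = P k s * (1 - s / (k + 1)) := by
  unfold P
  rw [Finset.prod_Icc_succ_top (by omega)]
  push_cast
  ring

lemma sum_P (n : ℕ) (s : ℂ) (hs : s ≠ 0) :
    ∑ k ∈ Finset.range (n + 1), P k s / (k + 1) = (1 - P (n + 1) s) / s := by
  induction n with
  | zero =>
    simp only [Finset.sum_range_succ, Finset.sum_range_zero, P_succ]
    have : P 0 s = 1 := by simp [P]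
    rw [this]
    field_simp
    ring
  | succ n ih =>
    rw [Finset.sum_range_succ, ih, P_succ (n + 1)]
    have hk : ((n : ℂ) + 1 + 1) ≠ 0 := by
      have := Nat.cast_add_one_ne_zero (R := ℂ) (n + 1)
      push_cast at this; exact this
    push_cast
    field_simp
    ring

theorem symmetrized_harmonic_sum (n : ℕ) (t : ℂ) (ht : t ≠ 0) :
    ∑ k ∈ Finset.range (n + 1), Pplus k t / (k + 1) = -Pminus (n + 1) t / t := by
  have hIt : I * t ≠ 0 := mul_ne_zero I_ne_zero ht
  have hmIt : -(I * t) ≠ 0 := neg_ne_zero.mpr hIt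
  have h1 := sum_P n (I * t) hIt
  have h2 := sum_P n (-(I * t)) hmIt
  unfold Pplus Pminus
  have : ∑ k ∈ Finset.range (n + 1), (P k (I * t) + P k (-(I * t))) / 2 / (k + 1)
      = ((∑ k ∈ Finset.range (n + 1), P k (I * t) / (k + 1))
        + (∑ k ∈ Finset.range (n + 1), P k (-(I * t)) / (k + 1))) / 2 := by
    rw [← Finset.sum_add_distrib, Finset.sum_div]
    congr 1; ext k; ring
  rw [this, h1, h2]
  have hI2 : I * I = -1 := Complex.I_mul_I
  field_simp
  ring_nf
end

section
/- For a fixed compact set K ⊂ ℂ and fixed real a, b with b > 0, there exists a constant C such that for all s ∈ K and all k ≥ 1, |P_k((s-a)/b + 1)| ≤ C·k^{-Re((s-a)/b + 1)}. -/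
lemma norm_one_sub_le_exp (w : ℂ) : ‖1 - w‖ ≤ Real.exp (-w.re + ‖w‖ ^ 2) := by
  have hsq : ‖1 - w‖ ^ 2 = 1 + (-2 * w.re + ‖w‖ ^ 2) := by
    rw [Complex.sq_norm, Complex.sq_norm,
      Complex.normSq_apply, Complex.normSq_apply]
    simp only [Complex.sub_re, Complex.sub_im, Complex.one_re, Complex.one_im]
    ring
  have h2 : ‖1 - w‖ ^ 2 ≤ Real.exp (-2 * w.re + ‖w‖ ^ 2) := by
    rw [hsq]
    have := Real.add_one_le_exp (-2 * w.re + ‖w‖ ^ 2)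
    linarith
  have h3 : Real.exp (-2 * w.re + ‖w‖ ^ 2) ≤ (Real.exp (-w.re + ‖w‖ ^ 2)) ^ 2 := by
    have hpow : (Real.exp (-w.re + ‖w‖ ^ 2)) ^ 2
        = Real.exp ((-w.re + ‖w‖ ^ 2) + (-w.re + ‖w‖ ^ 2)) := by
      rw [pow_two, ← Real.exp_add]
    rw [hpow]
    exact Real.exp_le_exp.mpr (by nlinarith [sq_nonneg ‖w‖])
  nlinarith [norm_nonneg (1 - w), Real.exp_pos (-w.re + ‖w‖ ^ 2)]

lemma sum_inv_sq_le (k : ℕ) (hk : 1 ≤ k) :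
    ∑ j ∈ Finset.Icc 1 k, ((j : ℝ) ^ 2)⁻¹ ≤ 2 - (k : ℝ)⁻¹ := by
  induction k, hk using Nat.le_induction with
  | base => norm_num
  | succ k hk ih =>
    rw [Finset.sum_Icc_succ_top (by omega : 1 ≤ k + 1)]
    have hk1 : (1 : ℝ) ≤ (k : ℝ) := by exact_mod_cast hk
    have h1 : (0 : ℝ) < (k : ℝ) := by linarith
    have h2 : (0 : ℝ) < (k : ℝ) + 1 := by linarith
    have key : (((k : ℝ) + 1) ^ 2)⁻¹ ≤ (k : ℝ)⁻¹ - ((k : ℝ) + 1)⁻¹ := by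
      have e1 : (k : ℝ)⁻¹ - ((k : ℝ) + 1)⁻¹ = ((k : ℝ) * ((k : ℝ) + 1))⁻¹ := by
        field_simp
        ring
      have e2 : (((k : ℝ) + 1) ^ 2)⁻¹ ≤ ((k : ℝ) * ((k : ℝ) + 1))⁻¹ := by
        apply inv_anti₀ (by positivity)
        nlinarith
      rw [e1]; exact e2
    push_cast
    linarith

theorem pochhammer_uniform_bound (K : Set ℂ) (hK : IsCompact K) (a b : ℝ) (hb : 0 < b) :
    ∃ C : ℝ, ∀ s ∈ K, ∀ k : ℕ, 1 ≤ k →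
      ‖P k ((s - a) / b + 1)‖ ≤ C * (k : ℝ) ^ (-(((s - (a : ℂ)) / (b : ℂ) + 1).re)) := by
  obtain ⟨M, hM⟩ : ∃ M : ℝ, ∀ s ∈ K, ‖(s - (a : ℂ)) / (b : ℂ) + 1‖ ≤ M := by
    have hc : ContinuousOn (fun s : ℂ => (s - (a : ℂ)) / (b : ℂ) + 1) K := by fun_prop
    exact hK.exists_bound_of_continuousOn hc
  set M' : ℝ := max M 0 with hM'def
  have hM'0 : 0 ≤ M' := le_max_right _ _
  refine ⟨Real.exp (M' + 2 * M' ^ 2), ?_⟩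
  intro s hs k hk
  set z : ℂ := (s - (a : ℂ)) / (b : ℂ) + 1 with hz
  have hzM : ‖z‖ ≤ M' := le_trans (hM s hs) (le_max_left _ _)
  have hre : |z.re| ≤ M' := le_trans (Complex.abs_re_le_norm z) hzM
  have hkpos : (0 : ℝ) < (k : ℝ) := by exact_mod_cast hk
  -- step 1: bound the product by an exponential of a sum
  have h1 : ‖P k z‖ ≤
      Real.exp (∑ j ∈ Finset.Icc 1 k, (-(z.re * (j : ℝ)⁻¹) + M' ^ 2 * ((j : ℝ) ^ 2)⁻¹)) := by
    rw [P, norm_prod, Real.exp_sum]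
    apply Finset.prod_le_prod (fun j _ => norm_nonneg _)
    intro j hj
    have hj1 : 1 ≤ j := (Finset.mem_Icc.mp hj).1
    have hjpos : (0 : ℝ) < (j : ℝ) := by exact_mod_cast hj1
    refine le_trans (norm_one_sub_le_exp (z / (j : ℂ))) (Real.exp_le_exp.mpr ?_)
    have hre' : (z / (j : ℂ)).re = z.re / (j : ℝ) := by
      rw [show ((j : ℂ)) = ((j : ℝ) : ℂ) by push_cast; ring, Complex.div_ofReal_re]
    have hnorm' : ‖z / (j : ℂ)‖ ^ 2 = ‖z‖ ^ 2 / (j : ℝ) ^ 2 := by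
      rw [norm_div, div_pow]
      norm_num
    rw [hre', hnorm']
    have hsq : ‖z‖ ^ 2 ≤ M' ^ 2 := by nlinarith [norm_nonneg z]
    have : ‖z‖ ^ 2 / (j : ℝ) ^ 2 ≤ M' ^ 2 * ((j : ℝ) ^ 2)⁻¹ := by
      rw [div_eq_mul_inv]
      exact mul_le_mul_of_nonneg_right hsq (by positivity)
    have heq : -(z.re / (j : ℝ)) = -(z.re * (j : ℝ)⁻¹) := by ring
    linarith [heq ▸ le_refl (-(z.re / (j : ℝ)))]
  -- split the sum
  set H : ℝ := ∑ j ∈ Finset.Icc 1 k, ((j : ℝ))⁻¹ with hHdef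
  set S : ℝ := ∑ j ∈ Finset.Icc 1 k, ((j : ℝ) ^ 2)⁻¹ with hSdef
  have hsum : ∑ j ∈ Finset.Icc 1 k, (-(z.re * (j : ℝ)⁻¹) + M' ^ 2 * ((j : ℝ) ^ 2)⁻¹)
      = -z.re * H + M' ^ 2 * S := by
    rw [hHdef, hSdef, Finset.mul_sum, Finset.mul_sum, ← Finset.sum_add_distrib]
    exact Finset.sum_congr rfl fun j _ => by ring
  -- harmonic bounds
  have hHeq : H = (harmonic k : ℝ) := by
    rw [hHdef, harmonic_eq_sum_Icc]
    push_cast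
    rfl
  have hH1 : Real.log k ≤ H := by
    rw [hHeq]
    refine le_trans ?_ (log_add_one_le_harmonic k)
    exact Real.log_le_log hkpos (by push_cast; linarith)
  have hH2 : H ≤ 1 + Real.log k := by
    rw [hHeq]; exact harmonic_le_one_add_log k
  have hS : S ≤ 2 := by
    have := sum_inv_sq_le k hk
    have : (0 : ℝ) < (k : ℝ)⁻¹ := by positivity
    linarith [sum_inv_sq_le k hk]
  -- combine
  have hmid : -z.re * H ≤ -z.re * Real.log k + M' := by
    rcases le_or_gt 0 z.re with h | h
    · have : |z.re| = z.re := abs_of_nonneg h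
      nlinarith
    · have : |z.re| = -z.re := abs_of_neg h
      nlinarith
  have h2 : ‖P k z‖ ≤ Real.exp (-z.re * Real.log k + M' + 2 * M' ^ 2) := by
    refine le_trans h1 (by rw [hsum] at *; exact Real.exp_le_exp.mpr (by nlinarith))
  have hfin : Real.exp (-z.re * Real.log k + M' + 2 * M' ^ 2)
      = Real.exp (M' + 2 * M' ^ 2) * (k : ℝ) ^ (-z.re) := by
    rw [Real.rpow_def_of_pos hkpos, ← Real.exp_add]
    ring_nf
  exact hfin ▸ h2
end

section
/- Let A : [1,∞) → ℝ be measurable, nonnegative, and satisfy A(x) ≤ C₂·x^{-m} for some m with 2m + a - 2 > 0. Then the coefficient b_k = ∫_1^∞ A(x)·x^{-a/2}·(1 - x^{-b/2})^k dx (with a, b > 0) satisfies b_k ≤ (2C₂/b)·Γ((2m+a-2)/b)·Γ(k+1)/Γ((2m+a-2)/b + 1 + k), and in particular b_k = O(k^{-(2m+a-2)/b}) as k → ∞. -/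
open MeasureTheory Real


lemma beta_Ioo (s : ℝ) (hs : 0 < s) (k : ℕ) :
    ∫ y in Set.Ioo (0:ℝ) 1, y ^ (s - 1) * (1 - y) ^ k
      = Real.Gamma s * Real.Gamma (k + 1) / Real.Gamma (s + 1 + k) := by
  have hpos : 0 < Real.Gamma (s + 1 + k) :=
    Real.Gamma_pos_of_pos (by positivity)
  set I : ℝ := ∫ y in (0:ℝ)..1, y ^ (s - 1) * (1 - y) ^ k with hI
  have h1 : Complex.betaIntegral (s : ℂ) ((k : ℂ) + 1) = (I : ℂ) := by
    rw [Complex.betaIntegral, hI, ← intervalIntegral.integral_ofReal]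
    apply intervalIntegral.integral_congr
    intro x hx
    rw [Set.uIcc_of_le zero_le_one] at hx
    dsimp only
    have e1 : (s : ℂ) - 1 = ((s - 1 : ℝ) : ℂ) := by push_cast; ring
    have e2 : ((k : ℂ) + 1) - 1 = ((k : ℕ) : ℂ) := by ring
    rw [e1, e2, ← Complex.ofReal_cpow hx.1, Complex.cpow_natCast]
    push_cast
    ring
  have h2 := Complex.Gamma_mul_Gamma_eq_betaIntegral
    (s := (s : ℂ)) (t := (k : ℂ) + 1) (by simpa using hs)
    (by simp [Complex.add_re]; positivity)
  rw [h1] at h2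
  have e3 : (s : ℂ) + ((k : ℂ) + 1) = ((s + 1 + k : ℝ) : ℂ) := by push_cast; ring
  have e4 : (k : ℂ) + 1 = (((k : ℝ) + 1 : ℝ) : ℂ) := by push_cast; ring
  rw [e3, e4, Complex.Gamma_ofReal, Complex.Gamma_ofReal, Complex.Gamma_ofReal] at h2
  have h3 : Real.Gamma s * Real.Gamma ((k : ℝ) + 1) = Real.Gamma (s + 1 + k) * I := by
    exact_mod_cast h2
  have h4 : ∫ y in Set.Ioo (0:ℝ) 1, y ^ (s - 1) * (1 - y) ^ k = I := by
    rw [hI, intervalIntegral.integral_of_le zero_le_one,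
      MeasureTheory.integral_Ioc_eq_integral_Ioo]
  rw [h4]
  field_simp
  linarith [h3]


lemma subst_Ioi (b c : ℝ) (hb : 0 < b) (hc : 1 < c) (k : ℕ) :
    ∫ x in Set.Ioi (1:ℝ), x ^ (-c) * (1 - x ^ (-(b / 2))) ^ k
      = (2 / b) * ∫ y in Set.Ioo (0:ℝ) 1, y ^ ((2 * c - 2) / b - 1) * (1 - y) ^ k := by
  set s : ℝ := (2 * c - 2) / b with hs
  set f : ℝ → ℝ := fun y => y ^ (s - 1) * (1 - y) ^ k with hf
  set g : ℝ → ℝ := Set.Ioo (0:ℝ) 1 |>.indicator f with hg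
  set p : ℝ := -(b / 2) with hp'
  have hpneg : p < 0 := by rw [hp']; linarith
  have hp : p ≠ 0 := hpneg.ne
  have key := integral_comp_rpow_Ioi g hp
  have hR : ∫ y in Set.Ioi (0:ℝ), g y = ∫ y in Set.Ioo (0:ℝ) 1, f y := by
    rw [hg, integral_indicator measurableSet_Ioo,
      Measure.restrict_restrict measurableSet_Ioo,
      Set.inter_eq_left.mpr Set.Ioo_subset_Ioi_self]
  have hL : (∫ x in Set.Ioi (0:ℝ), (|p| * x ^ (p - 1)) • g (x ^ p))
      = ∫ x in Set.Ioi (0:ℝ),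
          (Set.Ioi (1:ℝ)).indicator (fun x => (b / 2) * (x ^ (-c) * (1 - x ^ p) ^ k)) x := by
    apply setIntegral_congr_fun measurableSet_Ioi
    intro x hx
    have hx0 : (0:ℝ) < x := hx
    have habs : |p| = b / 2 := by rw [hp', abs_neg, abs_of_pos (by linarith)]
    dsimp only
    by_cases h1 : 1 < x
    · have hmem : x ^ p ∈ Set.Ioo (0:ℝ) 1 :=
        ⟨Real.rpow_pos_of_pos hx0 p, Real.rpow_lt_one_of_one_lt_of_neg h1 hpneg⟩
      rw [Set.indicator_of_mem (Set.mem_Ioi.mpr h1), hg, Set.indicator_of_mem hmem, hf]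
      dsimp only
      rw [smul_eq_mul, habs]
      rw [show (x ^ p) ^ (s - 1) = x ^ (p * (s - 1)) from
        (Real.rpow_mul hx0.le p (s - 1)).symm]
      have hcomb : x ^ (p - 1) * x ^ (p * (s - 1)) = x ^ (p - 1 + p * (s - 1)) :=
        (Real.rpow_add hx0 _ _).symm
      have hexp : p - 1 + p * (s - 1) = -c := by
        rw [hp', hs]; field_simp; ring
      calc b / 2 * x ^ (p - 1) * (x ^ (p * (s - 1)) * (1 - x ^ p) ^ k)
          = b / 2 * (x ^ (p - 1) * x ^ (p * (s - 1)) * (1 - x ^ p) ^ k) := by ring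
        _ = b / 2 * (x ^ (-c) * (1 - x ^ p) ^ k) := by rw [hcomb, hexp]
    · have hge : 1 ≤ x ^ p :=
        Real.one_le_rpow_of_pos_of_le_one_of_nonpos hx0 (not_lt.1 h1) hpneg.le
      rw [hg, Set.indicator_of_notMem (fun hmem => absurd hmem.2 (not_lt.2 hge)),
        Set.indicator_of_notMem (by simpa using h1), smul_zero]
  rw [hL, hR, integral_indicator measurableSet_Ioi,
    Measure.restrict_restrict measurableSet_Ioi,
    Set.inter_eq_left.mpr (Set.Ioi_subset_Ioi zero_le_one),
    integral_const_mul] at key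
  rw [← key]
  field_simp


lemma J_le (s : ℝ) (hs : 0 < s) (k : ℕ) (hk : 1 ≤ k) :
    ∫ y in Set.Ioo (0:ℝ) 1, y ^ (s - 1) * (1 - y) ^ k
      ≤ Real.Gamma s * (k : ℝ) ^ (-s) := by
  have hk0 : (0:ℝ) < k := by exact_mod_cast hk
  have hk1 : (1:ℝ) ≤ k := by exact_mod_cast hk
  set f : ℝ → ℝ := fun y => y ^ (s - 1) * (1 - y) ^ k with hf
  have hEq : ∫ y in Set.Ioo (0:ℝ) 1, f y
      = ∫ y in Set.Ioi (0:ℝ), (Set.Ioo (0:ℝ) 1).indicator f y := by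
    rw [integral_indicator measurableSet_Ioo,
      Measure.restrict_restrict measurableSet_Ioo,
      Set.inter_eq_left.mpr Set.Ioo_subset_Ioi_self]
  have hexpmeas : Measurable fun t : ℝ => t ^ (s - 1) * Real.exp (-((k:ℝ) * t)) := by
    fun_prop
  have hintexp : IntegrableOn (fun t : ℝ => t ^ (s - 1) * Real.exp (-((k:ℝ) * t)))
      (Set.Ioi 0) := by
    apply (Real.GammaIntegral_convergent hs).mono' hexpmeas.aestronglyMeasurable
    filter_upwards [self_mem_ae_restrict measurableSet_Ioi] with t ht
    have ht0 : (0:ℝ) < t := ht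
    rw [Real.norm_eq_abs, abs_of_nonneg (by positivity)]
    rw [mul_comm (Real.exp (-t))]
    refine mul_le_mul_of_nonneg_left ?_ (Real.rpow_nonneg ht0.le _)
    apply Real.exp_le_exp.mpr
    nlinarith
  have hmono : ∫ y in Set.Ioi (0:ℝ), (Set.Ioo (0:ℝ) 1).indicator f y
      ≤ ∫ t in Set.Ioi (0:ℝ), t ^ (s - 1) * Real.exp (-((k:ℝ) * t)) := by
    refine integral_mono_of_nonneg ?_ hintexp ?_
    · refine Filter.Eventually.of_forall (Set.indicator_nonneg ?_)
      intro y hy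
      exact mul_nonneg (Real.rpow_nonneg hy.1.le _) (pow_nonneg (by linarith [hy.2]) _)
    · filter_upwards [self_mem_ae_restrict measurableSet_Ioi] with t ht
      have ht0 : (0:ℝ) < t := ht
      by_cases hmem : t ∈ Set.Ioo (0:ℝ) 1
      · rw [Set.indicator_of_mem hmem]
        show t ^ (s - 1) * (1 - t) ^ k ≤ t ^ (s - 1) * Real.exp (-((k:ℝ) * t))
        refine mul_le_mul_of_nonneg_left ?_ (Real.rpow_nonneg ht0.le _)
        have h1 : 1 - t ≤ Real.exp (-t) := by
          have := Real.add_one_le_exp (-t); linarith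
        calc (1 - t) ^ k ≤ (Real.exp (-t)) ^ k :=
              pow_le_pow_left₀ (by linarith [hmem.2]) h1 k
          _ = Real.exp (-((k:ℝ) * t)) := by
              rw [← Real.exp_nat_mul]; ring_nf
      · rw [Set.indicator_of_notMem hmem]
        positivity
  have hval := integral_rpow_mul_exp_neg_mul_Ioi hs hk0
  have hpow : (1 / (k:ℝ)) ^ s = (k : ℝ) ^ (-s) := by
    rw [one_div, Real.inv_rpow hk0.le, ← Real.rpow_neg hk0.le]
  calc ∫ y in Set.Ioo (0:ℝ) 1, f y
      = ∫ y in Set.Ioi (0:ℝ), (Set.Ioo (0:ℝ) 1).indicator f y := hEq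
    _ ≤ ∫ t in Set.Ioi (0:ℝ), t ^ (s - 1) * Real.exp (-((k:ℝ) * t)) := hmono
    _ = (1 / (k:ℝ)) ^ s * Real.Gamma s := hval
    _ = Real.Gamma s * (k : ℝ) ^ (-s) := by rw [hpow]; ring

lemma step_bound (a b m C₂ : ℝ) (ha : 0 < a) (hb : 0 < b) (hm : 0 < m)
    (hC₂ : 0 < C₂) (hma : 0 < 2 * m + a - 2)
    (A : ℝ → ℝ) (hnn : ∀ x, 1 ≤ x → 0 ≤ A x)
    (hbound : ∀ x, 1 ≤ x → A x ≤ C₂ * x ^ (-m)) (k : ℕ) :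
    ∫ x in Set.Ioi (1 : ℝ), A x * x ^ (-(a / 2)) * (1 - x ^ (-(b / 2))) ^ k
      ≤ (2 * C₂ / b) *
        ∫ y in Set.Ioo (0:ℝ) 1, y ^ ((2 * m + a - 2) / b - 1) * (1 - y) ^ k := by
  set c : ℝ := m + a / 2 with hc'
  have hc : 1 < c := by rw [hc']; linarith
  have hq : ∀ x : ℝ, 1 < x →
      0 ≤ (1 - x ^ (-(b / 2))) ^ k ∧ (1 - x ^ (-(b / 2))) ^ k ≤ 1 := by
    intro x hx
    have ht0 : 0 ≤ x ^ (-(b / 2)) := Real.rpow_nonneg (by linarith) _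
    have ht1 : x ^ (-(b / 2)) ≤ 1 :=
      Real.rpow_le_one_of_one_le_of_nonpos hx.le (by linarith)
    exact ⟨pow_nonneg (by linarith) _, pow_le_one₀ (by linarith) (by linarith)⟩
  have hintbase : IntegrableOn (fun x : ℝ => C₂ * x ^ (-c)) (Set.Ioi 1) :=
    (integrableOn_Ioi_rpow_of_lt (by linarith [hc] : -c < -1) zero_lt_one).const_mul C₂
  have hgmeas : Measurable fun x : ℝ => C₂ * (x ^ (-c) * (1 - x ^ (-(b / 2))) ^ k) := by
    fun_prop
  have hint : IntegrableOn (fun x : ℝ => C₂ * (x ^ (-c) * (1 - x ^ (-(b / 2))) ^ k))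
      (Set.Ioi 1) := by
    apply hintbase.mono' hgmeas.aestronglyMeasurable
    filter_upwards [self_mem_ae_restrict measurableSet_Ioi] with x hx
    have hx1 : (1:ℝ) < x := hx
    have hx0 : (0:ℝ) < x := by linarith
    obtain ⟨hq0, hq1⟩ := hq x hx1
    have hrp : 0 ≤ x ^ (-c) := Real.rpow_nonneg hx0.le _
    rw [Real.norm_eq_abs, abs_of_nonneg (by positivity)]
    calc C₂ * (x ^ (-c) * (1 - x ^ (-(b / 2))) ^ k) ≤ C₂ * (x ^ (-c) * 1) := by
          apply mul_le_mul_of_nonneg_left _ hC₂.le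
          exact mul_le_mul_of_nonneg_left hq1 hrp
      _ = C₂ * x ^ (-c) := by ring
  have hmono : ∫ x in Set.Ioi (1 : ℝ), A x * x ^ (-(a / 2)) * (1 - x ^ (-(b / 2))) ^ k
      ≤ ∫ x in Set.Ioi (1:ℝ), C₂ * (x ^ (-c) * (1 - x ^ (-(b / 2))) ^ k) := by
    apply integral_mono_of_nonneg _ hint
    · filter_upwards [self_mem_ae_restrict measurableSet_Ioi] with x hx
      have hx1 : (1:ℝ) < x := hx
      have hx0 : (0:ℝ) < x := by linarith
      obtain ⟨hq0, hq1⟩ := hq x hx1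
      calc A x * x ^ (-(a / 2)) * (1 - x ^ (-(b / 2))) ^ k
          ≤ C₂ * x ^ (-m) * x ^ (-(a / 2)) * (1 - x ^ (-(b / 2))) ^ k := by
            apply mul_le_mul_of_nonneg_right _ hq0
            exact mul_le_mul_of_nonneg_right (hbound x hx1.le)
              (Real.rpow_nonneg hx0.le _)
        _ = C₂ * (x ^ (-c) * (1 - x ^ (-(b / 2))) ^ k) := by
            have hx' : x ^ (-m) * x ^ (-(a/2)) = x ^ (-c) := by
              rw [← Real.rpow_add hx0]; congr 1; rw [hc']; ring
            rw [← hx']; ring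
    · filter_upwards [self_mem_ae_restrict measurableSet_Ioi] with x hx
      have hx1 : (1:ℝ) < x := hx
      have hx0 : (0:ℝ) < x := by linarith
      obtain ⟨hq0, _⟩ := hq x hx1
      exact mul_nonneg (mul_nonneg (hnn x hx1.le) (Real.rpow_nonneg hx0.le _)) hq0
  calc ∫ x in Set.Ioi (1 : ℝ), A x * x ^ (-(a / 2)) * (1 - x ^ (-(b / 2))) ^ k
      ≤ ∫ x in Set.Ioi (1:ℝ), C₂ * (x ^ (-c) * (1 - x ^ (-(b / 2))) ^ k) := hmono
    _ = C₂ * ∫ x in Set.Ioi (1:ℝ), x ^ (-c) * (1 - x ^ (-(b / 2))) ^ k :=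
        integral_const_mul _ _
    _ = C₂ * ((2 / b) *
        ∫ y in Set.Ioo (0:ℝ) 1, y ^ ((2 * c - 2) / b - 1) * (1 - y) ^ k) := by
        rw [subst_Ioi b c hb hc k]
    _ = (2 * C₂ / b) *
        ∫ y in Set.Ioo (0:ℝ) 1, y ^ ((2 * m + a - 2) / b - 1) * (1 - y) ^ k := by
        rw [show (2 * c - 2) / b = (2 * m + a - 2) / b by rw [hc']; ring_nf]
        ring

theorem coefficient_bound (a b m C₂ : ℝ) (ha : 0 < a) (hb : 0 < b) (hm : 0 < m)
    (hC₂ : 0 < C₂) (hma : 0 < 2 * m + a - 2)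
    (A : ℝ → ℝ) (hmeas : Measurable A) (hnn : ∀ x, 1 ≤ x → 0 ≤ A x)
    (hbound : ∀ x, 1 ≤ x → A x ≤ C₂ * x ^ (-m)) :
    (∀ k : ℕ,
      ∫ x in Set.Ioi (1 : ℝ), A x * x ^ (-(a / 2)) * (1 - x ^ (-(b / 2))) ^ k
        ≤ (2 * C₂ / b) * (Real.Gamma ((2 * m + a - 2) / b) * Real.Gamma (k + 1)
            / Real.Gamma ((2 * m + a - 2) / b + 1 + k))) ∧
    ∃ C : ℝ, ∀ k : ℕ, 1 ≤ k →
      ∫ x in Set.Ioi (1 : ℝ), A x * x ^ (-(a / 2)) * (1 - x ^ (-(b / 2))) ^ k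
        ≤ C * (k : ℝ) ^ (-((2 * m + a - 2) / b)) := by
  have hs : 0 < (2 * m + a - 2) / b := div_pos hma hb
  constructor
  · intro k
    have h1 := step_bound a b m C₂ ha hb hm hC₂ hma A hnn hbound k
    rwa [beta_Ioo ((2 * m + a - 2) / b) hs k] at h1
  · refine ⟨(2 * C₂ / b) * Real.Gamma ((2 * m + a - 2) / b), fun k hk => ?_⟩
    have h1 := step_bound a b m C₂ ha hb hm hC₂ hma A hnn hbound k
    have h2 := J_le ((2 * m + a - 2) / b) hs k hk
    have h3 : (0:ℝ) ≤ 2 * C₂ / b := by positivity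
    calc ∫ x in Set.Ioi (1 : ℝ), A x * x ^ (-(a / 2)) * (1 - x ^ (-(b / 2))) ^ k
        ≤ (2 * C₂ / b) * ∫ y in Set.Ioo (0:ℝ) 1,
            y ^ ((2 * m + a - 2) / b - 1) * (1 - y) ^ k := h1
      _ ≤ (2 * C₂ / b) * (Real.Gamma ((2 * m + a - 2) / b)
            * (k : ℝ) ^ (-((2 * m + a - 2) / b))) := mul_le_mul_of_nonneg_left h2 h3
      _ = ((2 * C₂ / b) * Real.Gamma ((2 * m + a - 2) / b))
            * (k : ℝ) ^ (-((2 * m + a - 2) / b)) := by ring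
end

section
/- For a > 0 and ε_n > 0 with ε_n·log n → ∞ (i.e., 1/ε_n = o(log n)), the integral I_n = ∫_0^1 exp(-a·y^{-ε_n})·(1-y)^{n+1}/y dy satisfies ε_n·I_n → 0 as n → ∞. Consequently, the remainder R_n(0, β_n) = (4/β_n)·I_n with ε_n = 2/β_n tends to 0 whenever β_n = o(log n). -/
open Real Filter Asymptotics MeasureTheory intervalIntegral

lemma aux_exp_le (a : ℝ) (ha : 0 < a) {t : ℝ} (ht : 0 < t) :
    Real.exp (-(a * t)) ≤ 4 / (a ^ 2 * t ^ 2) := by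
  have h1 : a * t / 2 ≤ Real.exp (a * t / 2) := by
    have := Real.add_one_le_exp (a * t / 2); linarith
  have h2 : (a * t / 2) ^ 2 ≤ Real.exp (a * t / 2) ^ 2 :=
    pow_le_pow_left₀ (by positivity) h1 2
  have h3 : Real.exp (a * t / 2) ^ 2 = Real.exp (a * t) := by
    rw [sq, ← Real.exp_add]; ring_nf
  rw [h3] at h2
  have h4 : (0:ℝ) < (a * t / 2) ^ 2 := by positivity
  rw [Real.exp_neg]
  have h5 : (Real.exp (a * t))⁻¹ ≤ ((a * t / 2) ^ 2)⁻¹ :=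
    inv_anti₀ h4 h2
  refine h5.trans (le_of_eq ?_)
  field_simp
  ring

lemma aux_pt (a : ℝ) (ha : 0 < a) (ε : ℝ) (hε : 0 < ε) {y : ℝ} (hy : 0 < y) :
    Real.exp (-a * y ^ (-ε)) ≤ 4 / a ^ 2 * y ^ (2 * ε) := by
  have ht : 0 < y ^ (-ε) := Real.rpow_pos_of_pos hy _
  have h := aux_exp_le a ha ht
  rw [neg_mul]
  refine h.trans (le_of_eq ?_)
  have h2 : (y ^ (-ε)) ^ 2 = (y ^ (2 * ε))⁻¹ := by
    rw [← Real.rpow_natCast (y ^ (-ε)) 2, ← Real.rpow_mul hy.le, ← Real.rpow_neg hy.le]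
    norm_num; ring_nf
  rw [h2]
  have h3 : (0:ℝ) < y ^ (2 * ε) := Real.rpow_pos_of_pos hy _
  field_simp

lemma key_bound (a : ℝ) (ha : 0 < a) (ε : ℝ) (hε : 0 < ε) (n : ℕ) (δ : ℝ)
    (hδ0 : 0 < δ) (hδ1 : δ ≤ 1) :
    ε * ∫ y in (0:ℝ)..1, Real.exp (-a * y ^ (-ε)) * (1 - y) ^ (n + 1) / y
      ≤ 2 / a ^ 2 * (δ ^ (2 * ε) + Real.exp (-((n:ℝ) + 1) * δ)) := by
  set f : ℝ → ℝ := fun y => Real.exp (-a * y ^ (-ε)) * (1 - y) ^ (n + 1) / y with hf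
  set g : ℝ → ℝ := fun y => 4 / a ^ 2 * y ^ (2 * ε - 1) with hg
  have hf0 : f 0 = 0 := by
    simp [hf]
  have hgnn : ∀ y : ℝ, 0 ≤ y → 0 ≤ g y := fun y hy =>
    mul_nonneg (by positivity) (Real.rpow_nonneg hy _)
  have hfnn : ∀ y ∈ Set.Icc (0:ℝ) 1, 0 ≤ f y := by
    rintro y ⟨h0, h1⟩
    exact div_nonneg (mul_nonneg (Real.exp_pos _).le (pow_nonneg (by linarith) _)) h0
  have hfg : ∀ y ∈ Set.Icc (0:ℝ) 1, f y ≤ g y := by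
    rintro y ⟨h0, h1⟩
    rcases eq_or_lt_of_le h0 with rfl | hy
    · rw [hf0]; exact hgnn 0 le_rfl
    · have hE := aux_pt a ha ε hε hy
      have hP : (1 - y) ^ (n + 1) ≤ 1 :=
        pow_le_one₀ (by linarith) (by linarith)
      calc f y ≤ (4 / a ^ 2 * y ^ (2 * ε)) * 1 / y := by
            rw [hf]
            rw [div_le_div_iff_of_pos_right hy]
            exact mul_le_mul hE hP (pow_nonneg (by linarith) _) (by positivity)
        _ = g y := by
            show 4 / a ^ 2 * y ^ (2 * ε) * 1 / y = 4 / a ^ 2 * y ^ (2 * ε - 1)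
            rw [Real.rpow_sub hy, Real.rpow_one]; ring
  have hgi : IntervalIntegrable g volume 0 1 :=
    (intervalIntegrable_rpow' (by linarith)).const_mul _
  have hfm : AEStronglyMeasurable f (MeasureTheory.volume.restrict (Set.uIoc (0:ℝ) 1)) := by
    apply Measurable.aestronglyMeasurable
    rw [hf]
    fun_prop
  have hfi : IntervalIntegrable f volume 0 1 := by
    apply hgi.mono_fun' hfm
    rw [Filter.EventuallyLE, MeasureTheory.ae_restrict_iff' measurableSet_uIoc]
    refine Filter.Eventually.of_forall fun y hy => ?_
    rw [Set.uIoc_of_le (by norm_num : (0:ℝ) ≤ 1)] at hy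
    have h := hfg y (Set.Ioc_subset_Icc_self hy)
    have hnn := hfnn y (Set.Ioc_subset_Icc_self hy)
    rwa [Real.norm_eq_abs, abs_of_nonneg hnn]
  have hδmem : δ ∈ Set.uIcc (0:ℝ) 1 := by
    rw [Set.uIcc_of_le (by norm_num)]; exact ⟨hδ0.le, hδ1⟩
  have hf1 : IntervalIntegrable f volume 0 δ :=
    hfi.mono_set (Set.uIcc_subset_uIcc Set.left_mem_uIcc hδmem)
  have hf2 : IntervalIntegrable f volume δ 1 :=
    hfi.mono_set (Set.uIcc_subset_uIcc hδmem Set.right_mem_uIcc)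
  have hg1 : IntervalIntegrable g volume 0 δ :=
    (intervalIntegrable_rpow' (by linarith)).const_mul _
  have hsplit := intervalIntegral.integral_add_adjacent_intervals hf1 hf2
  have h2ε : (0:ℝ) < 2 * ε := by linarith
  have hA : ∫ y in (0:ℝ)..δ, f y ≤ 4 / a ^ 2 * (δ ^ (2 * ε) / (2 * ε)) := by
    have hm := intervalIntegral.integral_mono_on hδ0.le hf1 hg1
      (fun x hx => hfg x ⟨hx.1, hx.2.trans hδ1⟩)
    refine hm.trans (le_of_eq ?_)
    rw [hg]
    rw [intervalIntegral.integral_const_mul, integral_rpow (Or.inl (by linarith))]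
    have he : 2 * ε - 1 + 1 = 2 * ε := by ring
    rw [he, Real.zero_rpow (ne_of_gt h2ε)]
    ring
  have hfg2 : ∀ y ∈ Set.Icc δ 1, f y ≤ Real.exp (-((n:ℝ) + 1) * δ) * g y := by
    rintro y ⟨h0, h1⟩
    have hy : 0 < y := lt_of_lt_of_le hδ0 h0
    have hE := aux_pt a ha ε hε hy
    have hP : (1 - y) ^ (n + 1) ≤ Real.exp (-((n:ℝ) + 1) * δ) := by
      have h1y : 1 - y ≤ Real.exp (-y) := by
        have := Real.add_one_le_exp (-y); linarith
      have h2 : (1 - y) ^ (n + 1) ≤ Real.exp (-y) ^ (n + 1) :=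
        pow_le_pow_left₀ (by linarith) h1y _
      have h3 : Real.exp (-y) ^ (n + 1) = Real.exp ((((n : ℕ) + 1 : ℕ) : ℝ) * (-y)) := by
        rw [Real.exp_nat_mul]
      refine h2.trans ?_
      rw [h3]
      apply Real.exp_le_exp.mpr
      push_cast
      have hn : (0:ℝ) ≤ (n:ℝ) := Nat.cast_nonneg n
      nlinarith
    calc f y ≤ (4 / a ^ 2 * y ^ (2 * ε)) * Real.exp (-((n:ℝ) + 1) * δ) / y := by
          rw [hf, div_le_div_iff_of_pos_right hy]
          exact mul_le_mul hE hP (pow_nonneg (by linarith) _) (by positivity)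
      _ = Real.exp (-((n:ℝ) + 1) * δ) * g y := by
          show _ = _ * (4 / a ^ 2 * y ^ (2 * ε - 1))
          rw [Real.rpow_sub hy, Real.rpow_one]; ring
  have hB : ∫ y in δ..1, f y ≤ Real.exp (-((n:ℝ) + 1) * δ) * (4 / a ^ 2 * (1 / (2 * ε))) := by
    have hg2 : IntervalIntegrable (fun y => Real.exp (-((n:ℝ) + 1) * δ) * g y) volume δ 1 :=
      ((intervalIntegrable_rpow' (by linarith : (-1:ℝ) < 2 * ε - 1)).const_mul _).const_mul _
    have hm := intervalIntegral.integral_mono_on hδ1 hf2 hg2 hfg2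
    refine hm.trans ?_
    rw [intervalIntegral.integral_const_mul]
    have : ∫ y in δ..1, g y ≤ 4 / a ^ 2 * (1 / (2 * ε)) := by
      rw [hg, intervalIntegral.integral_const_mul, integral_rpow (Or.inl (by linarith))]
      have he : 2 * ε - 1 + 1 = 2 * ε := by ring
      rw [he, Real.one_rpow]
      have hδs : 0 ≤ δ ^ (2 * ε) := Real.rpow_nonneg hδ0.le _
      gcongr
      linarith
    exact mul_le_mul_of_nonneg_left this (Real.exp_pos _).le
  rw [← hsplit]
  have key := mul_le_mul_of_nonneg_left (add_le_add hA hB) hε.le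
  refine key.trans (le_of_eq ?_)
  field_simp
  ring

theorem remainder_integral_tendsto_zero (a : ℝ) (ha : 0 < a) :
    (∀ ε : ℕ → ℝ, (∀ n, 0 < ε n) →
      Tendsto (fun n : ℕ => ε n * Real.log n) atTop atTop →
      Tendsto (fun n : ℕ => ε n *
          ∫ y in (0 : ℝ)..1, Real.exp (-a * y ^ (-(ε n))) * (1 - y) ^ (n + 1) / y)
        atTop (nhds 0)) ∧
    (∀ β : ℕ → ℝ, (∀ n, 0 < β n) →
      (fun n : ℕ => β n) =o[atTop] (fun n : ℕ => Real.log n) →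
      Tendsto (fun n : ℕ => (4 / β n) *
          ∫ y in (0 : ℝ)..1, Real.exp (-a * y ^ (-(2 / β n))) * (1 - y) ^ (n + 1) / y)
        atTop (nhds 0)) := by
  have main : ∀ ε : ℕ → ℝ, (∀ n, 0 < ε n) →
      Tendsto (fun n : ℕ => ε n * Real.log n) atTop atTop →
      Tendsto (fun n : ℕ => ε n *
          ∫ y in (0 : ℝ)..1, Real.exp (-a * y ^ (-(ε n))) * (1 - y) ^ (n + 1) / y)
        atTop (nhds 0) := by
    intro ε hεpos hεlog
    set F : ℕ → ℝ := fun n => ε n *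
        ∫ y in (0:ℝ)..1, Real.exp (-a * y ^ (-(ε n))) * (1 - y) ^ (n + 1) / y with hF
    set B : ℕ → ℝ := fun n => 2 / a ^ 2 * (((n:ℝ) ^ (-(1/2):ℝ)) ^ (2 * ε n)
        + Real.exp (-((n:ℝ) + 1) * (n:ℝ) ^ (-(1/2):ℝ))) with hB
    have hlow : ∀ n, 0 ≤ F n := by
      intro n
      apply mul_nonneg (hεpos n).le
      apply intervalIntegral.integral_nonneg (by norm_num)
      intro u hu
      exact div_nonneg (mul_nonneg (Real.exp_pos _).le
        (pow_nonneg (by linarith [hu.2]) _)) hu.1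
    have hup : ∀ᶠ n in atTop, F n ≤ B n := by
      filter_upwards [eventually_ge_atTop 1] with n hn
      have hn1 : (1:ℝ) ≤ (n:ℝ) := by exact_mod_cast hn
      have hδ0 : 0 < (n:ℝ) ^ (-(1/2):ℝ) := Real.rpow_pos_of_pos (by linarith) _
      have hδ1 : (n:ℝ) ^ (-(1/2):ℝ) ≤ 1 :=
        Real.rpow_le_one_of_one_le_of_nonpos hn1 (by norm_num)
      exact key_bound a ha (ε n) (hεpos n) n _ hδ0 hδ1
    have hBlim : Tendsto B atTop (nhds 0) := by
      have t1 : Tendsto (fun n : ℕ => ((n:ℝ) ^ (-(1/2):ℝ)) ^ (2 * ε n)) atTop (nhds 0) := by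
        have e1 : Tendsto (fun n : ℕ => Real.exp (-(ε n * Real.log n))) atTop (nhds 0) :=
          Real.tendsto_exp_atBot.comp (tendsto_neg_atTop_atBot.comp hεlog)
        apply e1.congr'
        filter_upwards [eventually_ge_atTop 1] with n hn
        have hn0 : (0:ℝ) < (n:ℝ) := by
          have : (1:ℝ) ≤ (n:ℝ) := by exact_mod_cast hn
          linarith
        rw [← Real.rpow_mul hn0.le, Real.rpow_def_of_pos hn0]
        congr 1; ring
      have harg : Tendsto (fun n : ℕ => ((n:ℝ) + 1) * (n:ℝ) ^ (-(1/2):ℝ)) atTop atTop := by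
        have hhalf : Tendsto (fun n : ℕ => (n:ℝ) ^ ((1/2):ℝ)) atTop atTop :=
          (tendsto_rpow_atTop (by norm_num)).comp tendsto_natCast_atTop_atTop
        apply tendsto_atTop_mono' atTop ?_ hhalf
        filter_upwards [eventually_ge_atTop 1] with n hn
        have hn1 : (1:ℝ) ≤ (n:ℝ) := by exact_mod_cast hn
        have hn0 : (0:ℝ) < (n:ℝ) := by linarith
        have hδ0 : (0:ℝ) ≤ (n:ℝ) ^ (-(1/2):ℝ) := (Real.rpow_pos_of_pos hn0 _).le
        have heq : (n:ℝ) ^ ((1/2):ℝ) = (n:ℝ) * (n:ℝ) ^ (-(1/2):ℝ) := by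
          have h := (Real.rpow_add hn0 1 (-(1/2))).symm
          rw [Real.rpow_one] at h
          rw [h]
          congr 1
          norm_num
        rw [heq]
        apply mul_le_mul_of_nonneg_right (by linarith) hδ0
      have t2 : Tendsto (fun n : ℕ =>
          Real.exp (-((n:ℝ) + 1) * (n:ℝ) ^ (-(1/2):ℝ))) atTop (nhds 0) := by
        have := Real.tendsto_exp_atBot.comp (tendsto_neg_atTop_atBot.comp harg)
        apply this.congr
        intro n
        simp only [Function.comp_apply]
        congr 1
        ring
      have := (t1.add t2).const_mul (2 / a ^ 2)
      rw [hB]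
      simpa using this
    exact squeeze_zero' (Eventually.of_forall hlow) hup hBlim
  refine ⟨main, ?_⟩
  intro β hβ hβo
  have hεpos : ∀ n, 0 < 2 / β n := fun n => div_pos two_pos (hβ n)
  have hlog : Tendsto (fun n : ℕ => 2 / β n * Real.log n) atTop atTop := by
    have h0 : Tendsto (fun n : ℕ => β n / Real.log n) atTop (nhds 0) :=
      hβo.tendsto_div_nhds_zero
    have hmem : ∀ᶠ n : ℕ in atTop, β n / Real.log n ∈ Set.Ioi (0:ℝ) := by
      filter_upwards [eventually_ge_atTop 2] with n hn
      have h2 : (2:ℝ) ≤ (n:ℝ) := by exact_mod_cast hn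
      have hlogpos : 0 < Real.log n := Real.log_pos (by linarith)
      exact div_pos (hβ n) hlogpos
    have h1 : Tendsto (fun n : ℕ => β n / Real.log n) atTop (nhdsWithin 0 (Set.Ioi 0)) :=
      tendsto_nhdsWithin_iff.mpr ⟨h0, hmem⟩
    have h2 : Tendsto (fun n : ℕ => (β n / Real.log n)⁻¹) atTop atTop :=
      h1.inv_tendsto_nhdsGT_zero
    have h3 := h2.const_mul_atTop (show (0:ℝ) < 2 by norm_num)
    apply h3.congr
    intro n
    rw [inv_div]
    ring
  have h1 := main (fun n => 2 / β n) hεpos hlog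
  have h2 := h1.const_mul 2
  rw [mul_zero] at h2
  apply h2.congr
  intro n
  ring
end

section
/- Let w > 0, a = w·B with β_n = B·log n, and I(n, a) = ∫_{n^{-a}}^1 (1-y)^{n+1}/y dy. Then for 0 < a ≤ 1 the quantity I(n,a)/(n^{a-1}) stays bounded (so I(n,a) → 0 when a < 1 and is O(1)-bounded for a = 1 up to a log factor), while for a > 1, I(n,a) ~ (a-1)·log n → ∞; hence the remainder R_n(0, β_n) = (4/β_n)·I(n,a) → 0 if and only if a ≤ 1. -/
open Real Filter Asymptotics intervalIntegral

lemma int_pow_sub (c : ℝ) (k : ℕ) :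
    (∫ y in c..1, (1 - y) ^ k) = (1 - c) ^ (k + 1) / (k + 1) := by
  have h := intervalIntegral.integral_comp_sub_left (a := c) (b := 1) (fun x => x ^ k) 1
  simp only [sub_self] at h
  rw [h, integral_pow]
  push_cast
  ring

lemma int_formula (c : ℝ) (hc0 : 0 < c) (hc1 : c ≤ 1) (m : ℕ) :
    ∫ y in c..1, (1 - y) ^ m / y
      = -Real.log c - ∑ k ∈ Finset.range m, (1 - c) ^ (k + 1) / (k + 1) := by
  have huIcc : Set.uIcc c 1 = Set.Icc c 1 := Set.uIcc_of_le hc1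
  have hne : ∀ y ∈ Set.uIcc c 1, y ≠ 0 := by
    intro y hy; rw [huIcc] at hy; exact (hc0.trans_le hy.1).ne'
  have hcong : Set.EqOn (fun y => (1 - y) ^ m / y)
      (fun y => 1 / y - ∑ k ∈ Finset.range m, (1 - y) ^ k) (Set.uIcc c 1) := by
    intro y hy
    have hy0 : y ≠ 0 := hne y hy
    have h1 : (1 : ℝ) - y ≠ 1 := by
      intro h; apply hy0; linarith
    simp only [geom_sum_eq h1]
    have h2 : (1 : ℝ) - y - 1 = -y := by ring
    rw [h2, div_neg, sub_neg_eq_add, ← add_div]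
    ring_nf
  rw [intervalIntegral.integral_congr hcong]
  have hi1 : IntervalIntegrable (fun y : ℝ => 1 / y) MeasureTheory.volume c 1 := by
    apply ContinuousOn.intervalIntegrable
    exact continuousOn_const.div continuousOn_id hne
  have hi2 : IntervalIntegrable (fun y : ℝ => ∑ k ∈ Finset.range m, (1 - y) ^ k)
      MeasureTheory.volume c 1 := by
    apply Continuous.intervalIntegrable
    exact continuous_finset_sum _ fun k _ => (continuous_const.sub continuous_id).pow k
  rw [intervalIntegral.integral_sub hi1 hi2]
  have h0 : (0 : ℝ) ∉ Set.uIcc c 1 := fun h => hne 0 h rfl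
  rw [integral_one_div h0]
  rw [integral_finset_sum (fun k _ =>
    (Continuous.intervalIntegrable (μ := MeasureTheory.volume) (a := c) (b := 1) (by continuity)))]
  simp only [int_pow_sub]
  rw [one_div, Real.log_inv]

lemma harmonic_cast (m : ℕ) : (harmonic m : ℝ) = ∑ k ∈ Finset.range m, ((k : ℝ) + 1)⁻¹ := by
  rw [harmonic]
  push_cast
  rfl

lemma sum_upper (c : ℝ) (hc0 : 0 ≤ c) (hc1 : c ≤ 1) (m : ℕ) :
    ∑ k ∈ Finset.range m, (1 - c) ^ (k + 1) / (k + 1) ≤ (harmonic m : ℝ) := by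
  rw [harmonic_cast]
  apply Finset.sum_le_sum
  intro k _
  rw [div_le_iff₀ (by positivity), inv_mul_cancel₀ (by positivity)]
  exact pow_le_one₀ (by linarith) (by linarith)

lemma sum_lower (c : ℝ) (hc1 : c ≤ 1) (m : ℕ) :
    (harmonic m : ℝ) - m * c ≤ ∑ k ∈ Finset.range m, (1 - c) ^ (k + 1) / (k + 1) := by
  have h : ∀ k ∈ Finset.range m, ((k : ℝ) + 1)⁻¹ - c ≤ (1 - c) ^ (k + 1) / (k + 1) := by
    intro k _
    have hb : 1 + ((k : ℕ) + 1 : ℕ) * (-c) ≤ (1 + (-c)) ^ ((k : ℕ) + 1) :=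
      one_add_mul_le_pow (by linarith) (k + 1)
    have hb' : 1 - ((k : ℝ) + 1) * c ≤ (1 - c) ^ (k + 1) := by
      have he : (1 : ℝ) + -c = 1 - c := by ring
      rw [he] at hb
      push_cast at hb
      linarith
    have hk : (0 : ℝ) < (k : ℝ) + 1 := by positivity
    rw [le_div_iff₀ hk]
    have : ((k : ℝ) + 1)⁻¹ * ((k : ℝ) + 1) = 1 := inv_mul_cancel₀ hk.ne'
    nlinarith [hb']
  calc (harmonic m : ℝ) - m * c = ∑ k ∈ Finset.range m, (((k : ℝ) + 1)⁻¹ - c) := by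
        rw [Finset.sum_sub_distrib, Finset.sum_const, Finset.card_range, harmonic_cast]
        ring
    _ ≤ _ := Finset.sum_le_sum h

lemma I_upper (c : ℝ) (hc0 : 0 < c) (hc1 : c ≤ 1) (m : ℕ) :
    (∫ y in c..1, (1 - y) ^ m / y) ≤ c⁻¹ * ((1 - c) ^ (m + 1) / (m + 1)) := by
  have hmono : ∀ y ∈ Set.Icc c 1, (1 - y) ^ m / y ≤ c⁻¹ * (1 - y) ^ m := by
    intro y hy
    have h1 : 0 ≤ (1 - y) ^ m := pow_nonneg (by linarith [hy.2]) m
    calc (1 - y) ^ m / y ≤ (1 - y) ^ m / c := by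
          apply div_le_div_of_nonneg_left h1 hc0 hy.1
      _ = c⁻¹ * (1 - y) ^ m := by rw [div_eq_inv_mul]
  have hint1 : IntervalIntegrable (fun y : ℝ => (1 - y) ^ m / y) MeasureTheory.volume c 1 := by
    apply ContinuousOn.intervalIntegrable
    apply ContinuousOn.div (Continuous.continuousOn (by continuity)) continuousOn_id
    intro y hy
    rw [Set.uIcc_of_le hc1] at hy
    exact (hc0.trans_le hy.1).ne'
  have hint2 : IntervalIntegrable (fun y : ℝ => c⁻¹ * (1 - y) ^ m) MeasureTheory.volume c 1 :=
    Continuous.intervalIntegrable (by continuity) c 1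
  calc (∫ y in c..1, (1 - y) ^ m / y) ≤ ∫ y in c..1, c⁻¹ * (1 - y) ^ m :=
        intervalIntegral.integral_mono_on hc1 hint1 hint2 hmono
    _ = c⁻¹ * ((1 - c) ^ (m + 1) / (m + 1)) := by
        rw [intervalIntegral.integral_const_mul, int_pow_sub]

lemma I_nonneg (c : ℝ) (hc0 : 0 < c) (hc1 : c ≤ 1) (m : ℕ) :
    0 ≤ ∫ y in c..1, (1 - y) ^ m / y := by
  apply intervalIntegral.integral_nonneg hc1
  intro y hy
  exact div_nonneg (pow_nonneg (by linarith [hy.2]) m) (le_of_lt (hc0.trans_le hy.1))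

theorem sin_case_convergence (w B a : ℝ) (hw : 0 < w) (hB : 0 < B) (ha : a = w * B)
    (β : ℕ → ℝ) (hβ : ∀ n, β n = B * Real.log n)
    (I : ℕ → ℝ) (hI : ∀ n, I n = ∫ y in ((n : ℝ) ^ (-a))..1, (1 - y) ^ (n + 1) / y) :
    (0 < a → a ≤ 1 → I =O[atTop] (fun n : ℕ => (n : ℝ) ^ (a - 1))) ∧
    (0 < a → a < 1 → Tendsto I atTop (nhds 0)) ∧
    (1 < a → (I ~[atTop] fun n : ℕ => (a - 1) * Real.log n) ∧ Tendsto I atTop atTop) ∧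
    (Tendsto (fun n : ℕ => (4 / β n) * I n) atTop (nhds 0) ↔ a ≤ 1) := by
  have ha0 : 0 < a := by rw [ha]; positivity
  set f : ℕ → ℝ := fun n => (a - 1) * Real.log n with hf
  have hcn : ∀ n : ℕ, 1 ≤ n → 0 < ((n : ℝ) ^ (-a)) ∧ ((n : ℝ) ^ (-a)) ≤ 1 := by
    intro n hn
    have hn1 : (1 : ℝ) ≤ (n : ℝ) := by exact_mod_cast hn
    exact ⟨Real.rpow_pos_of_pos (by linarith) _,
      Real.rpow_le_one_of_one_le_of_nonpos hn1 (by linarith)⟩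
  have hI0 : ∀ n : ℕ, 1 ≤ n → 0 ≤ I n := by
    intro n hn
    rw [hI n]
    exact I_nonneg _ (hcn n hn).1 (hcn n hn).2 _
  -- unconditional upper bound I n ≤ n ^ (a - 1)
  have hIub : ∀ n : ℕ, 1 ≤ n → I n ≤ (n : ℝ) ^ (a - 1) := by
    intro n hn
    have hn0 : (0 : ℝ) < (n : ℝ) := by exact_mod_cast hn
    obtain ⟨h1, h2⟩ := hcn n hn
    have hinv : ((n : ℝ) ^ (-a))⁻¹ = (n : ℝ) ^ a := by
      rw [Real.rpow_neg (le_of_lt hn0), inv_inv]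
    have key := I_upper _ h1 h2 (n + 1)
    rw [← hI n, hinv] at key
    push_cast at key
    have h3 : (1 - (n : ℝ) ^ (-a)) ^ (n + 1 + 1) ≤ 1 := pow_le_one₀ (by linarith) (by linarith)
    have h4 : (1 - (n : ℝ) ^ (-a)) ^ (n + 1 + 1) / ((n : ℝ) + 1 + 1) ≤ 1 / (n : ℝ) :=
      div_le_div₀ zero_le_one h3 hn0 (by linarith)
    calc I n ≤ (n : ℝ) ^ a * ((1 - (n : ℝ) ^ (-a)) ^ (n + 1 + 1) / ((n : ℝ) + 1 + 1)) := key
      _ ≤ (n : ℝ) ^ a * (1 / (n : ℝ)) :=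
          mul_le_mul_of_nonneg_left h4 (Real.rpow_nonneg (le_of_lt hn0) a)
      _ = (n : ℝ) ^ (a - 1) := by
          rw [Real.rpow_sub hn0, Real.rpow_one, mul_one_div]
  -- exact formula
  have hIeq : ∀ n : ℕ, 1 ≤ n → I n = a * Real.log n
      - ∑ k ∈ Finset.range (n + 1), (1 - (n : ℝ) ^ (-a)) ^ (k + 1) / (k + 1) := by
    intro n hn
    have hn0 : (0 : ℝ) < (n : ℝ) := by exact_mod_cast hn
    obtain ⟨h1, h2⟩ := hcn n hn
    rw [hI n, int_formula _ h1 h2, Real.log_rpow hn0]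
    ring_nf
  -- error bound when 1 < a
  have hE : 1 < a → ∀ n : ℕ, 1 ≤ n → |I n - f n| ≤ 2 := by
    intro ha1 n hn
    have hn0 : (0 : ℝ) < (n : ℝ) := by exact_mod_cast hn
    have hn1 : (1 : ℝ) ≤ (n : ℝ) := by exact_mod_cast hn
    obtain ⟨h1, h2⟩ := hcn n hn
    set S := ∑ k ∈ Finset.range (n + 1), (1 - (n : ℝ) ^ (-a)) ^ (k + 1) / (k + 1) with hS
    have hdiff : I n - f n = Real.log n - S := by
      rw [hIeq n hn, hf]; ring
    -- upper bound on the sum: S ≤ harmonic (n+1) ≤ 1 + log (n+1) ≤ 2 + log n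
    have hup : S ≤ 2 + Real.log n := by
      have h5 := sum_upper _ (le_of_lt h1) h2 (n + 1)
      have h6 := harmonic_le_one_add_log (n + 1)
      have h7 : Real.log ((n : ℝ) + 1) ≤ Real.log 2 + Real.log n := by
        rw [← Real.log_mul (by norm_num) (ne_of_gt hn0)]
        exact Real.log_le_log (by linarith) (by linarith)
      have h8 : Real.log 2 ≤ 1 := by
        have := Real.log_two_lt_d9
        linarith
      push_cast at h6
      linarith
    -- lower bound: S ≥ harmonic (n+1) - (n+1) * c ≥ log (n+2) - 2 ≥ log n - 2
    have hlo : Real.log n - 2 ≤ S := by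
      have h5 := sum_lower _ h2 (n + 1)
      have h6 := log_add_one_le_harmonic (n + 1)
      have h9 : ((n : ℝ) + 1) * ((n : ℝ) ^ (-a)) ≤ 2 := by
        have hc' : ((n : ℝ) ^ (-a)) ≤ (n : ℝ) ^ (-1 : ℝ) :=
          Real.rpow_le_rpow_of_exponent_le hn1 (by linarith)
        have hinv : (n : ℝ) ^ (-1 : ℝ) = ((n : ℝ))⁻¹ := Real.rpow_neg_one _
        have h10 : ((n : ℝ) + 1) * ((n : ℝ) ^ (-a)) ≤ (2 * (n : ℝ)) * ((n : ℝ))⁻¹ := by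
          apply mul_le_mul (by linarith) (hinv ▸ hc') (le_of_lt h1) (by linarith)
        rw [mul_inv_cancel_right₀ (ne_of_gt hn0)] at h10
        linarith
      have h11 : Real.log n ≤ Real.log ((n : ℝ) + 1 + 1) :=
        Real.log_le_log hn0 (by linarith)
      push_cast at h5 h6
      linarith
    rw [hdiff, abs_le]
    constructor <;> linarith
  -- f tends to atTop when 1 < a
  have hfa : 1 < a → Tendsto f atTop atTop := by
    intro ha1
    apply Tendsto.const_mul_atTop (by linarith : (0 : ℝ) < a - 1)
    exact Real.tendsto_log_atTop.comp tendsto_natCast_atTop_atTop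
  -- part 3 pieces
  have hequiv : 1 < a → (I ~[atTop] f) := by
    intro ha1
    have hO : (I - f) =O[atTop] (fun _ : ℕ => (1 : ℝ)) := by
      apply Asymptotics.IsBigO.of_bound 2
      filter_upwards [eventually_ge_atTop 1] with n hn
      simpa using hE ha1 n hn
    have ho : (fun _ : ℕ => (1 : ℝ)) =o[atTop] f := by
      rw [Asymptotics.isLittleO_const_left]
      right
      have : Tendsto (fun n : ℕ => |f n|) atTop atTop :=
        tendsto_abs_atTop_atTop.comp (hfa ha1)
      simpa [Function.comp_def, Real.norm_eq_abs] using this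
    exact hO.trans_isLittleO ho
  have htop : 1 < a → Tendsto I atTop atTop := by
    intro ha1
    apply tendsto_atTop_mono' atTop (_ : ∀ᶠ n in atTop, f n - 2 ≤ I n)
    · have := tendsto_atTop_add_const_right atTop (-2) (hfa ha1)
      simpa [sub_eq_add_neg] using this
    · filter_upwards [eventually_ge_atTop 1] with n hn
      have := hE ha1 n hn
      rw [abs_le] at this
      linarith
  -- ratio limit when 1 < a
  have hrat : 1 < a → Tendsto (fun n : ℕ => (4 / β n) * I n) atTop (nhds (4 / B * (a - 1))) := by
    intro ha1
    have hlog : Tendsto (fun n : ℕ => Real.log n) atTop atTop :=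
      Real.tendsto_log_atTop.comp tendsto_natCast_atTop_atTop
    have hr0 : Tendsto (fun n : ℕ => I n / Real.log n - (a - 1)) atTop (nhds 0) := by
      refine squeeze_zero_norm' (a := fun n : ℕ => 2 / Real.log n) ?_ ?_
      · filter_upwards [eventually_ge_atTop 2] with n hn
        have hn1 : 1 ≤ n := by omega
        have hlogpos : 0 < Real.log n := Real.log_pos (by exact_mod_cast (by omega : 1 < n))
        have heq : I n / Real.log n - (a - 1) = (I n - f n) / Real.log n := by
          field_simp [hf]
          ring
        rw [heq, Real.norm_eq_abs, abs_div, abs_of_pos hlogpos]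
        exact div_le_div_of_nonneg_right (hE ha1 n hn1) hlogpos.le
      · exact Tendsto.div_atTop tendsto_const_nhds hlog
    have hr : Tendsto (fun n : ℕ => I n / Real.log n) atTop (nhds (a - 1)) := by
      have := hr0.add_const (a - 1)
      simpa using this
    have hmul : Tendsto (fun n : ℕ => 4 / B * (I n / Real.log n)) atTop (nhds (4 / B * (a - 1))) :=
      hr.const_mul _
    apply hmul.congr'
    filter_upwards [eventually_ge_atTop 2] with n hn
    have hlogpos : 0 < Real.log n := by
      apply Real.log_pos
      exact_mod_cast (by omega : (2:ℕ) ≤ n)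
    rw [hβ n]
    field_simp
  refine ⟨?_, ?_, ?_, ?_⟩
  · intro _ _
    apply Asymptotics.IsBigO.of_bound 1
    filter_upwards [eventually_ge_atTop 1] with n hn
    rw [one_mul, Real.norm_eq_abs, Real.norm_eq_abs, abs_of_nonneg (hI0 n hn),
      abs_of_nonneg (Real.rpow_nonneg (Nat.cast_nonneg n) _)]
    exact hIub n hn
  · intro _ ha1
    refine squeeze_zero_norm' (a := fun n : ℕ => (n : ℝ) ^ (a - 1)) ?_ ?_
    · filter_upwards [eventually_ge_atTop 1] with n hn
      rw [Real.norm_eq_abs, abs_of_nonneg (hI0 n hn)]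
      exact hIub n hn
    · have h := tendsto_rpow_neg_atTop (by linarith : (0 : ℝ) < 1 - a)
      have h2 : Tendsto (fun n : ℕ => ((n : ℝ)) ^ (-(1 - a))) atTop (nhds 0) :=
        h.comp tendsto_natCast_atTop_atTop
      simpa [neg_sub] using h2
  · intro ha1
    exact ⟨hequiv ha1, htop ha1⟩
  · constructor
    · intro h
      by_contra hgt
      push_neg at hgt
      have := tendsto_nhds_unique h (hrat hgt)
      have hpos : 0 < 4 / B * (a - 1) := by
        apply mul_pos (by positivity)
        linarith
      linarith [this ▸ hpos]
    · intro hle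
      refine squeeze_zero_norm' (a := fun n : ℕ => 4 / (B * Real.log n)) ?_ ?_
      · filter_upwards [eventually_ge_atTop 2] with n hn
        have hn1 : 1 ≤ n := by omega
        have hn0 : (0 : ℝ) < (n : ℝ) := by exact_mod_cast hn1
        have hlogpos : 0 < Real.log n := by
          apply Real.log_pos
          exact_mod_cast (by omega : (2:ℕ) ≤ n)
        have hβpos : 0 < β n := by rw [hβ n]; positivity
        have hIle1 : I n ≤ 1 := by
          refine (hIub n hn1).trans ?_
          apply Real.rpow_le_one_of_one_le_of_nonpos (by exact_mod_cast hn1)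
          linarith
        rw [Real.norm_eq_abs, abs_of_nonneg (mul_nonneg (by positivity) (hI0 n hn1)), hβ n]
        calc 4 / (B * Real.log n) * I n ≤ 4 / (B * Real.log n) * 1 := by
              apply mul_le_mul_of_nonneg_left hIle1 (by positivity)
          _ = 4 / (B * Real.log n) := mul_one _
      · apply Tendsto.div_atTop tendsto_const_nhds
        apply Tendsto.const_mul_atTop hB
        exact Real.tendsto_log_atTop.comp tendsto_natCast_atTop_atTop
end
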